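/- For every real s ≥ 0 and reals a, b > 0, Γ(a+s)Γ(a+b)/(Γ(a)Γ(a+b+s)) = exp(-∫_0^∞ (1 - e^{-s x}) · e^{-a x}(1 - e^{-b x})/(x(1 - e^{-x})) dx), and the integrand is nonnegative. -/

import Mathlib

open MeasureTheory

open Set Real Filter Topology

lemma exp_neg_mul_integrableOn {t : ℝ} (ht : 0 < t) :
    IntegrableOn (fun x => exp (-(t*x))) (Ioi (0:ℝ)) := by
  simpa [neg_mul] using exp_neg_integrableOn_Ioi 0 ht

lemma frullani' {p q : ℝ} (hp : 0 < p) (hpq : p ≤ q) :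
    IntegrableOn (fun x => (exp (-(p*x)) - exp (-(q*x)))/x) (Ioi (0:ℝ)) ∧
    ∫ x in Ioi (0:ℝ), (exp (-(p*x)) - exp (-(q*x)))/x = log q - log p := by
  set μ := volume.restrict (Ioi (0:ℝ))
  set ν := volume.restrict (Ioc p q)
  -- inner interval integral
  have inner : ∀ x : ℝ, x ∈ Ioi (0:ℝ) →
      (∫ t, exp (-(t * x)) ∂ν) = (exp (-(p*x)) - exp (-(q*x)))/x := by
    intro x hx
    have hx0 : (0:ℝ) < x := hx
    have : (∫ t in p..q, exp (-(t * x))) = (-exp (-(q*x))/x) - (-exp (-(p*x))/x) := by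
      apply intervalIntegral.integral_eq_sub_of_hasDerivAt
      · intro t _
        have h1 : HasDerivAt (fun y : ℝ => -(y*x)) (-x) t := by
          have h := ((hasDerivAt_id t).mul_const x).neg
          rw [one_mul] at h
          exact h
        have := (h1.exp).neg.div_const x
        simpa [neg_mul, neg_neg, mul_div_assoc, div_self hx0.ne'] using this
      · apply Continuous.intervalIntegrable; continuity
    rw [intervalIntegral.integral_of_le hpq] at this
    rw [this]; ring
  -- integrability on the product
  have hFint : Integrable (fun z : ℝ × ℝ => exp (-(z.2 * z.1))) (μ.prod ν) := by
    have hbd : Integrable (fun z : ℝ × ℝ => exp (-(p * z.1)) * 1) (μ.prod ν) := by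
      exact Integrable.mul_prod (exp_neg_mul_integrableOn hp) (integrable_const 1)
    refine hbd.mono' ?_ ?_
    · exact (Continuous.aestronglyMeasurable (by continuity))
    · have hprod : μ.prod ν = (volume.prod volume).restrict ((Ioi (0:ℝ)) ×ˢ (Ioc p q)) := by
        rw [Measure.prod_restrict]
      rw [hprod]
      filter_upwards [ae_restrict_mem (measurableSet_Ioi.prod measurableSet_Ioc)] with z hz
      rcases hz with ⟨hz1, hz2⟩
      rw [norm_eq_abs, abs_exp, mul_one]
      apply exp_le_exp.2
      have : p * z.1 ≤ z.2 * z.1 := mul_le_mul_of_nonneg_right hz2.1.le (le_of_lt hz1)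
      linarith
  -- swap
  have hswap := MeasureTheory.integral_integral_swap (f := fun x t => exp (-(t * x)))
      (μ := μ) (ν := ν) hFint
  have hInt1 : IntegrableOn (fun x => (exp (-(p*x)) - exp (-(q*x)))/x) (Ioi (0:ℝ)) := by
    have := hFint.integral_prod_left
    refine this.congr ?_
    filter_upwards [ae_restrict_mem measurableSet_Ioi] with x hx
    exact inner x hx
  refine ⟨hInt1, ?_⟩
  have lhs_eq : (∫ x, ∫ t, exp (-(t * x)) ∂ν ∂μ)
      = ∫ x in Ioi (0:ℝ), (exp (-(p*x)) - exp (-(q*x)))/x := by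
    apply setIntegral_congr_fun measurableSet_Ioi
    intro x hx; exact inner x hx
  have rhs_eq : (∫ t, ∫ x, exp (-(t * x)) ∂μ ∂ν) = log q - log p := by
    have h1 : ∀ t ∈ Ioc p q, (∫ x, exp (-(t * x)) ∂μ) = 1/t := by
      intro t ht
      have ht0 : 0 < t := lt_of_lt_of_le hp ht.1.le
      have h : ∀ x ∈ Ici (0:ℝ), HasDerivAt (fun y => -exp (-(t*y))/t) (exp (-(t*x))) x := by
        intro x _
        have h1 : HasDerivAt (fun y : ℝ => -(t*y)) (-t) x := by
          have h := ((hasDerivAt_id x).const_mul t).neg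
          rw [mul_one] at h
          exact h
        have := (h1.exp).neg.div_const t
        simpa [neg_mul, neg_neg, mul_comm, mul_div_assoc, mul_div_cancel_left₀ _ ht0.ne'] using this
      have htend : Tendsto (fun y => -exp (-(t*y))/t) atTop (nhds 0) := by
        have h1 : Tendsto (fun y : ℝ => -(t*y)) atTop atBot := by
          have := tendsto_const_mul_atTop_of_pos ht0 |>.2 (tendsto_id (α := ℝ))
          exact tendsto_neg_atTop_atBot.comp this
        have := (Real.tendsto_exp_atBot.comp h1).neg.div_const t
        simpa using this
      have := MeasureTheory.integral_Ioi_of_hasDerivAt_of_tendsto' h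
          (exp_neg_mul_integrableOn ht0) htend
      simpa [neg_div] using this
    have : (∫ t in Ioc p q, ∫ x, exp (-(t * x)) ∂μ) = ∫ t in Ioc p q, 1/t := by
      apply setIntegral_congr_fun measurableSet_Ioc h1
    rw [show (∫ t, ∫ x, exp (-(t * x)) ∂μ ∂ν) = ∫ t in Ioc p q, ∫ x, exp (-(t * x)) ∂μ from rfl, this]
    rw [← intervalIntegral.integral_of_le hpq, integral_one_div]
    · rw [Real.log_div (lt_of_lt_of_le hp hpq).ne' hp.ne']
    · rw [uIcc_of_le hpq]
      rintro ⟨h0, -⟩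
      linarith
  rw [← lhs_eq, hswap, rhs_eq]

lemma bm_nonneg (s a b : ℝ) (hs : 0 ≤ s) (hb : 0 < b) :
    ∀ x ∈ Set.Ioi (0:ℝ), 0 ≤ (1 - Real.exp (-(s * x))) *
        (Real.exp (-(a * x)) * (1 - Real.exp (-(b * x)))) /
        (x * (1 - Real.exp (-x))) := by
  intro x hx
  have hx0 : (0:ℝ) < x := hx
  have h1 : Real.exp (-(s*x)) ≤ 1 := Real.exp_le_one_iff.2 (by nlinarith)
  have h2 : Real.exp (-(b*x)) ≤ 1 := Real.exp_le_one_iff.2 (by nlinarith)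
  have h3 : Real.exp (-x) < 1 := Real.exp_lt_one_iff.2 (by linarith)
  apply div_nonneg
  · exact mul_nonneg (by linarith) (mul_nonneg (Real.exp_pos _).le (by linarith))
  · exact mul_nonneg hx0.le (by linarith)

lemma bm_bound (s a b : ℝ) (hs : 0 ≤ s) (ha : 0 < a) (hb : 0 < b) :
    ∀ x ∈ Set.Ioi (0:ℝ), (1 - Real.exp (-(s * x))) *
        (Real.exp (-(a * x)) * (1 - Real.exp (-(b * x)))) /
        (x * (1 - Real.exp (-x)))
      ≤ (s * b * Real.exp 1 * Real.exp (a/2) + (1 - Real.exp (-1))⁻¹) *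
          Real.exp (-(a/2 * x)) := by
  intro x hx
  have hx0 : (0:ℝ) < x := hx
  have hden : 0 < 1 - Real.exp (-x) := by
    have : Real.exp (-x) < 1 := Real.exp_lt_one_iff.2 (by linarith)
    linarith
  have hs1 : 0 ≤ 1 - Real.exp (-(s*x)) := by
    have : Real.exp (-(s*x)) ≤ 1 := Real.exp_le_one_iff.2 (by nlinarith)
    linarith
  have hb1 : 0 ≤ 1 - Real.exp (-(b*x)) := by
    have : Real.exp (-(b*x)) ≤ 1 := Real.exp_le_one_iff.2 (by nlinarith)
    linarith
  have hK2 : (0:ℝ) < (1 - Real.exp (-1))⁻¹ := by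
    have : Real.exp (-1:ℝ) < 1 := Real.exp_lt_one_iff.2 (by norm_num)
    have : 0 < 1 - Real.exp (-1:ℝ) := by linarith
    positivity
  rcases le_or_gt x 1 with hx1 | hx1
  · have e1 : 1 - Real.exp (-(s*x)) ≤ s*x := by nlinarith [Real.add_one_le_exp (-(s*x))]
    have e2 : 1 - Real.exp (-(b*x)) ≤ b*x := by nlinarith [Real.add_one_le_exp (-(b*x))]
    have e3 : Real.exp (-(a*x)) ≤ 1 := Real.exp_le_one_iff.2 (by nlinarith)
    have hnum : (1 - Real.exp (-(s * x))) * (Real.exp (-(a * x)) * (1 - Real.exp (-(b * x))))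
        ≤ s*x * (b*x) := by
      have hEB : Real.exp (-(a*x)) * (1 - Real.exp (-(b*x))) ≤ 1 - Real.exp (-(b*x)) := by
        nlinarith [Real.exp_pos (-(a*x))]
      calc (1 - Real.exp (-(s * x))) * (Real.exp (-(a * x)) * (1 - Real.exp (-(b * x))))
          ≤ (1 - Real.exp (-(s * x))) * (1 - Real.exp (-(b*x))) :=
            mul_le_mul_of_nonneg_left hEB hs1
        _ ≤ s*x * (b*x) := mul_le_mul e1 e2 hb1 (by positivity)
    have hden2 : x * Real.exp (-x) ≤ 1 - Real.exp (-x) := by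
      have h := Real.add_one_le_exp x
      have hp := (Real.exp_pos (-x)).le
      have key : (x+1)*Real.exp (-x) ≤ Real.exp x * Real.exp (-x) :=
        mul_le_mul_of_nonneg_right h hp
      rw [← Real.exp_add] at key
      simp only [add_neg_cancel, Real.exp_zero] at key
      nlinarith
    have step : (1 - Real.exp (-(s * x))) * (Real.exp (-(a * x)) * (1 - Real.exp (-(b * x)))) /
        (x * (1 - Real.exp (-x))) ≤ (s*x*(b*x)) / (x * (x * Real.exp (-x))) := by
      apply div_le_div₀ (by positivity) hnum (by positivity)
      exact mul_le_mul_of_nonneg_left hden2 hx0.le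
    refine step.trans ?_
    have hrw : (s*x*(b*x)) / (x * (x * Real.exp (-x))) = s * b * Real.exp x := by
      rw [Real.exp_neg]
      field_simp
    rw [hrw]
    have e4 : Real.exp x ≤ Real.exp 1 := Real.exp_le_exp.2 hx1
    have e5 : Real.exp (-(a/2)) ≤ Real.exp (-(a/2 * x)) := Real.exp_le_exp.2 (by nlinarith)
    have e6 : s * b * Real.exp x ≤ s * b * Real.exp 1 :=
      mul_le_mul_of_nonneg_left e4 (by positivity)
    have hee : Real.exp (a/2) * Real.exp (-(a/2)) = 1 := by rw [← Real.exp_add]; simp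
    have e7 : s * b * Real.exp 1 = s * b * Real.exp 1 * (Real.exp (a/2) * Real.exp (-(a/2))) := by
      rw [hee, mul_one]
    calc s * b * Real.exp x ≤ s * b * Real.exp 1 := e6
      _ = s * b * Real.exp 1 * Real.exp (a/2) * Real.exp (-(a/2)) := by
          conv_rhs => rw [mul_assoc, hee, mul_one]
      _ ≤ s * b * Real.exp 1 * Real.exp (a/2) * Real.exp (-(a/2 * x)) :=
          mul_le_mul_of_nonneg_left e5 (by positivity)
      _ ≤ _ := by
          apply mul_le_mul_of_nonneg_right _ (Real.exp_pos _).le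
          linarith
  · have hA : 1 - Real.exp (-(s*x)) ≤ 1 := by nlinarith [Real.exp_pos (-(s*x))]
    have hnum : (1 - Real.exp (-(s * x))) * (Real.exp (-(a * x)) * (1 - Real.exp (-(b * x))))
        ≤ Real.exp (-(a*x)) := by
      have hEB : Real.exp (-(a*x)) * (1 - Real.exp (-(b*x))) ≤ Real.exp (-(a*x)) := by
        nlinarith [Real.exp_pos (-(a*x)), Real.exp_pos (-(b*x))]
      calc (1 - Real.exp (-(s * x))) * (Real.exp (-(a * x)) * (1 - Real.exp (-(b * x))))
          ≤ Real.exp (-(a*x)) * (1 - Real.exp (-(b*x))) :=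
            mul_le_of_le_one_left (mul_nonneg (Real.exp_pos _).le hb1) hA
        _ ≤ Real.exp (-(a*x)) := hEB
    have hden1 : (0:ℝ) < 1 - Real.exp (-1:ℝ) := by
      have : Real.exp (-1:ℝ) < 1 := Real.exp_lt_one_iff.2 (by norm_num)
      linarith
    have hden2 : 1 - Real.exp (-1:ℝ) ≤ x * (1 - Real.exp (-x)) := by
      have h1 : Real.exp (-x) ≤ Real.exp (-1:ℝ) := Real.exp_le_exp.2 (by linarith)
      nlinarith [Real.exp_pos (-1:ℝ)]
    have step : (1 - Real.exp (-(s * x))) * (Real.exp (-(a * x)) * (1 - Real.exp (-(b * x)))) /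
        (x * (1 - Real.exp (-x))) ≤ Real.exp (-(a*x)) / (1 - Real.exp (-1:ℝ)) :=
      div_le_div₀ (Real.exp_pos _).le hnum hden1 hden2
    refine step.trans ?_
    have e1 : Real.exp (-(a*x)) ≤ Real.exp (-(a/2*x)) := Real.exp_le_exp.2 (by nlinarith)
    have h2 : Real.exp (-(a*x)) / (1 - Real.exp (-1:ℝ))
        ≤ (1 - Real.exp (-1:ℝ))⁻¹ * Real.exp (-(a/2*x)) := by
      rw [div_eq_inv_mul]
      exact mul_le_mul_of_nonneg_left e1 hK2.le
    refine h2.trans ?_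
    apply mul_le_mul_of_nonneg_right _ (Real.exp_pos _).le
    nlinarith [mul_nonneg (mul_nonneg (mul_nonneg hs hb.le) (Real.exp_pos 1).le)
      (Real.exp_pos (a/2)).le]

lemma bm_integrable (s a b : ℝ) (hs : 0 ≤ s) (ha : 0 < a) (hb : 0 < b) :
    IntegrableOn (fun x => (1 - Real.exp (-(s * x))) *
        (Real.exp (-(a * x)) * (1 - Real.exp (-(b * x)))) /
        (x * (1 - Real.exp (-x)))) (Set.Ioi (0:ℝ)) := by
  have hbd : IntegrableOn (fun x => (s * b * Real.exp 1 * Real.exp (a/2) +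
      (1 - Real.exp (-1))⁻¹) * Real.exp (-(a/2 * x))) (Set.Ioi (0:ℝ)) := by
    have h := (exp_neg_integrableOn_Ioi 0 (half_pos ha)).const_mul
      (s * b * Real.exp 1 * Real.exp (a/2) + (1 - Real.exp (-1))⁻¹)
    simpa [neg_mul, IntegrableOn] using h
  refine hbd.mono' ?_ ?_
  · apply Measurable.aestronglyMeasurable
    fun_prop
  · filter_upwards [ae_restrict_mem measurableSet_Ioi] with x hx
    rw [Real.norm_eq_abs, abs_of_nonneg (bm_nonneg s a b hs hb x hx)]
    exact bm_bound s a b hs ha hb x hx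

lemma bm_sum_eq (s a b : ℝ) (n : ℕ) {x : ℝ} (hx : x ∈ Set.Ioi (0:ℝ)) :
    ∑ j ∈ Finset.range (n+1),
      ((Real.exp (-((a+j)*x)) - Real.exp (-((a+s+j)*x)))/x -
       (Real.exp (-((a+b+j)*x)) - Real.exp (-((a+b+s+j)*x)))/x)
    = (1 - Real.exp (-(s * x))) *
        (Real.exp (-(a * x)) * (1 - Real.exp (-(b * x)))) /
        (x * (1 - Real.exp (-x))) * (1 - Real.exp (-x)^(n+1)) := by
  have hx0 : (0:ℝ) < x := hx
  have hrlt : Real.exp (-x) < 1 := Real.exp_lt_one_iff.2 (by linarith)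
  have hrne : Real.exp (-x) ≠ 1 := hrlt.ne
  have key : ∀ p : ℝ, ∀ j : ℕ, Real.exp (-((p+j)*x)) = Real.exp (-(p*x)) * Real.exp (-x)^j := by
    intro p j
    rw [← Real.exp_nat_mul, ← Real.exp_add]
    ring_nf
  have key2 : ∀ p q : ℝ, Real.exp (-((p+q)*x)) = Real.exp (-(p*x)) * Real.exp (-(q*x)) := by
    intro p q
    rw [← Real.exp_add]
    ring_nf
  set c : ℝ := Real.exp (-(a*x)) - Real.exp (-((a+s)*x)) - Real.exp (-((a+b)*x))
      + Real.exp (-((a+b+s)*x)) with hc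
  have term : ∀ j ∈ Finset.range (n+1),
      ((Real.exp (-((a+j)*x)) - Real.exp (-((a+s+j)*x)))/x -
       (Real.exp (-((a+b+j)*x)) - Real.exp (-((a+b+s+j)*x)))/x)
      = (c/x) * Real.exp (-x)^j := by
    intro j _
    have k1 := key a j
    have k2 : Real.exp (-((a+s+j)*x)) = Real.exp (-((a+s)*x)) * Real.exp (-x)^j := key (a+s) j
    have k3 : Real.exp (-((a+b+j)*x)) = Real.exp (-((a+b)*x)) * Real.exp (-x)^j := key (a+b) j
    have k4 : Real.exp (-((a+b+s+j)*x)) = Real.exp (-((a+b+s)*x)) * Real.exp (-x)^j :=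
      key (a+b+s) j
    rw [k1, k2, k3, k4, hc]
    ring
  rw [Finset.sum_congr rfl term, ← Finset.mul_sum, geom_sum_eq hrne (n+1)]
  have hcval : c = (1 - Real.exp (-(s * x))) * (Real.exp (-(a * x)) * (1 - Real.exp (-(b * x)))) := by
    rw [hc, key2 a s, key2 a b, show a+b+s = a+(b+s) by ring, key2 a (b+s), key2 b s]
    ring
  rw [hcval]
  have h1 : Real.exp (-x) - 1 ≠ 0 := by
    intro h; apply hrne; linarith [sub_eq_zero.1 h]
  have h2 : 1 - Real.exp (-x) ≠ 0 := by
    intro h; apply hrne; linarith [sub_eq_zero.1 h]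
  field_simp
  ring

lemma bm_int_n (s a b : ℝ) (hs : 0 ≤ s) (ha : 0 < a) (hb : 0 < b) (n : ℕ) :
    ∫ x in Ioi (0:ℝ), (1 - Real.exp (-(s * x))) *
        (Real.exp (-(a * x)) * (1 - Real.exp (-(b * x)))) /
        (x * (1 - Real.exp (-x))) * (1 - Real.exp (-x)^(n+1))
    = ∑ j ∈ Finset.range (n+1),
        ((Real.log (a+s+j) - Real.log (a+j)) - (Real.log (a+b+s+j) - Real.log (a+b+j))) := by
  have hint1 : ∀ j : ℕ, IntegrableOn
      (fun x => (exp (-((a+j)*x)) - exp (-((a+s+j)*x)))/x) (Ioi (0:ℝ)) :=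
    fun j => (frullani' (by positivity) (by simp; linarith)).1
  have hint2 : ∀ j : ℕ, IntegrableOn
      (fun x => (exp (-((a+b+j)*x)) - exp (-((a+b+s+j)*x)))/x) (Ioi (0:ℝ)) :=
    fun j => (frullani' (by positivity) (by simp; linarith)).1
  have step1 : ∫ x in Ioi (0:ℝ), (1 - Real.exp (-(s * x))) *
        (Real.exp (-(a * x)) * (1 - Real.exp (-(b * x)))) /
        (x * (1 - Real.exp (-x))) * (1 - Real.exp (-x)^(n+1))
      = ∫ x in Ioi (0:ℝ), ∑ j ∈ Finset.range (n+1),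
          ((Real.exp (-((a+j)*x)) - Real.exp (-((a+s+j)*x)))/x -
           (Real.exp (-((a+b+j)*x)) - Real.exp (-((a+b+s+j)*x)))/x) := by
    apply setIntegral_congr_fun measurableSet_Ioi
    intro x hx
    exact (bm_sum_eq s a b n hx).symm
  rw [step1, integral_finset_sum (Finset.range (n+1))
    (f := fun (j : ℕ) (x : ℝ) =>
      (Real.exp (-((a+j)*x)) - Real.exp (-((a+s+j)*x)))/x -
      (Real.exp (-((a+b+j)*x)) - Real.exp (-((a+b+s+j)*x)))/x)
    (fun j _ => ((hint1 j).sub (hint2 j)))]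
  apply Finset.sum_congr rfl
  intro j _
  rw [integral_sub (hint1 j) (hint2 j),
    (frullani' (p := a + j) (q := a+s+j) (by positivity) (by simp; linarith)).2,
    (frullani' (p := a+b+j) (q := a+b+s+j) (by positivity) (by simp; linarith)).2]

lemma bm_gammaSeq (s a b : ℝ) (hs : 0 ≤ s) (ha : 0 < a) (hb : 0 < b) (n : ℕ) (hn : 1 ≤ n) :
    Real.GammaSeq (a+s) n * Real.GammaSeq (a+b) n /
      (Real.GammaSeq a n * Real.GammaSeq (a+b+s) n)
    = ∏ j ∈ Finset.range (n+1), ((a+j)*(a+b+s+j)) / ((a+s+j)*(a+b+j)) := by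
  have hN : (0:ℝ) < n := by exact_mod_cast hn
  have hP1 : (0:ℝ) < ∏ j ∈ Finset.range (n+1), (a + j) :=
    Finset.prod_pos (fun j _ => by positivity)
  have hP2 : (0:ℝ) < ∏ j ∈ Finset.range (n+1), (a + s + j) :=
    Finset.prod_pos (fun j _ => by positivity)
  have hP3 : (0:ℝ) < ∏ j ∈ Finset.range (n+1), (a + b + j) :=
    Finset.prod_pos (fun j _ => by positivity)
  have hP4 : (0:ℝ) < ∏ j ∈ Finset.range (n+1), (a + b + s + j) :=
    Finset.prod_pos (fun j _ => by positivity)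
  have hF : (0:ℝ) < (n.factorial : ℝ) := by exact_mod_cast Nat.factorial_pos n
  have key : (n:ℝ)^(a+s) * (n:ℝ)^(a+b) = (n:ℝ)^a * (n:ℝ)^(a+b+s) := by
    rw [← Real.rpow_add hN, ← Real.rpow_add hN]
    ring_nf
  have hrp : ∀ c : ℝ, (0:ℝ) < (n:ℝ)^c := fun c => Real.rpow_pos_of_pos hN c
  rw [Real.GammaSeq, Real.GammaSeq, Real.GammaSeq, Real.GammaSeq]
  rw [Finset.prod_div_distrib, Finset.prod_mul_distrib, Finset.prod_mul_distrib]
  rw [div_eq_div_iff (by positivity) (by positivity)]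
  field_simp
  linear_combination key

lemma bm_exp_sum (s a b : ℝ) (hs : 0 ≤ s) (ha : 0 < a) (hb : 0 < b) (n : ℕ) :
    Real.exp (-∑ j ∈ Finset.range (n+1),
        ((Real.log (a+s+j) - Real.log (a+j)) - (Real.log (a+b+s+j) - Real.log (a+b+j))))
    = ∏ j ∈ Finset.range (n+1), ((a+j)*(a+b+s+j)) / ((a+s+j)*(a+b+j)) := by
  rw [← Finset.sum_neg_distrib, Real.exp_sum]
  apply Finset.prod_congr rfl
  intro j _
  have h1 : (0:ℝ) < a + j := by positivity
  have h2 : (0:ℝ) < a + s + j := by positivity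
  have h3 : (0:ℝ) < a + b + j := by positivity
  have h4 : (0:ℝ) < a + b + s + j := by positivity
  rw [show -((Real.log (a+s+j) - Real.log (a+j)) - (Real.log (a+b+s+j) - Real.log (a+b+j)))
      = (Real.log (a+j) + Real.log (a+b+s+j)) - (Real.log (a+s+j) + Real.log (a+b+j)) by ring,
    Real.exp_sub, Real.exp_add, Real.exp_add, Real.exp_log h1, Real.exp_log h2,
    Real.exp_log h3, Real.exp_log h4]

/-- Malmstén-type formula for Beta moments: for s ≥ 0 and a, b > 0,
Γ(a+s)Γ(a+b)/(Γ(a)Γ(a+b+s)) = exp(-∫_0^∞ (1-e^{-sx}) e^{-ax}(1-e^{-bx})/(x(1-e^{-x})) dx),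
with a nonnegative integrand. -/
theorem beta_malmsten (s a b : ℝ) (hs : 0 ≤ s) (ha : 0 < a) (hb : 0 < b) :
    (∀ x ∈ Set.Ioi (0:ℝ), 0 ≤ (1 - Real.exp (-(s * x))) *
        (Real.exp (-(a * x)) * (1 - Real.exp (-(b * x)))) /
        (x * (1 - Real.exp (-x)))) ∧
    Real.Gamma (a + s) * Real.Gamma (a + b) /
        (Real.Gamma a * Real.Gamma (a + b + s)) =
      Real.exp (-∫ x in Set.Ioi (0:ℝ),
        (1 - Real.exp (-(s * x))) *
          (Real.exp (-(a * x)) * (1 - Real.exp (-(b * x)))) /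
          (x * (1 - Real.exp (-x)))) := by
  refine ⟨bm_nonneg s a b hs hb, ?_⟩
  set f : ℝ → ℝ := fun x => (1 - Real.exp (-(s * x))) *
      (Real.exp (-(a * x)) * (1 - Real.exp (-(b * x)))) /
      (x * (1 - Real.exp (-x))) with hf
  set F : ℕ → ℝ → ℝ := fun n x => f x * (1 - Real.exp (-x)^(n+1)) with hF
  -- convergence of integrals
  have hmeas : ∀ n : ℕ, AEStronglyMeasurable (F n) (volume.restrict (Ioi (0:ℝ))) := by
    intro n
    apply Measurable.aestronglyMeasurable
    apply Measurable.mul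
    · fun_prop
    · fun_prop
  have hbound : ∀ n : ℕ, ∀ᵐ x ∂(volume.restrict (Ioi (0:ℝ))), ‖F n x‖ ≤ f x := by
    intro n
    filter_upwards [ae_restrict_mem measurableSet_Ioi] with x hx
    have hx0 : (0:ℝ) < x := hx
    have hf0 : 0 ≤ f x := bm_nonneg s a b hs hb x hx
    have hr0 : (0:ℝ) < Real.exp (-x) := Real.exp_pos _
    have hr1 : Real.exp (-x) < 1 := Real.exp_lt_one_iff.2 (by linarith)
    have h1 : 0 ≤ 1 - Real.exp (-x)^(n+1) := by
      have : Real.exp (-x)^(n+1) ≤ 1 := pow_le_one₀ hr0.le hr1.le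
      linarith
    have h2 : 1 - Real.exp (-x)^(n+1) ≤ 1 := by
      have := pow_pos hr0 (n+1); linarith
    rw [Real.norm_eq_abs, abs_of_nonneg (mul_nonneg hf0 h1)]
    calc f x * (1 - Real.exp (-x)^(n+1)) ≤ f x * 1 := mul_le_mul_of_nonneg_left h2 hf0
      _ = f x := mul_one _
  have hptw : ∀ᵐ x ∂(volume.restrict (Ioi (0:ℝ))),
      Tendsto (fun n => F n x) atTop (𝓝 (f x)) := by
    filter_upwards [ae_restrict_mem measurableSet_Ioi] with x hx
    have hx0 : (0:ℝ) < x := hx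
    have hr1 : |Real.exp (-x)| < 1 := by
      rw [abs_of_pos (Real.exp_pos _)]
      exact Real.exp_lt_one_iff.2 (by linarith)
    have h0 : Tendsto (fun n : ℕ => Real.exp (-x)^(n+1)) atTop (𝓝 0) :=
      (tendsto_pow_atTop_nhds_zero_of_abs_lt_one hr1).comp (tendsto_add_atTop_nat 1)
    have := (tendsto_const_nhds (x := (1:ℝ)) (f := atTop)).sub h0 |>.const_mul (f x)
    simpa using this
  have hIconv : Tendsto (fun n => ∫ x in Ioi (0:ℝ), F n x) atTop
      (𝓝 (∫ x in Ioi (0:ℝ), f x)) :=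
    tendsto_integral_of_dominated_convergence f hmeas (bm_integrable s a b hs ha hb)
      hbound hptw
  have hEconv : Tendsto (fun n => Real.exp (-∫ x in Ioi (0:ℝ), F n x)) atTop
      (𝓝 (Real.exp (-∫ x in Ioi (0:ℝ), f x))) :=
    (Real.continuous_exp.tendsto _).comp hIconv.neg
  -- Gamma sequence convergence
  have hGpos1 : (0:ℝ) < Real.Gamma a := Real.Gamma_pos_of_pos ha
  have hGpos2 : (0:ℝ) < Real.Gamma (a+b+s) := Real.Gamma_pos_of_pos (by linarith)
  have hG : Tendsto (fun n => Real.GammaSeq (a+s) n * Real.GammaSeq (a+b) n /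
      (Real.GammaSeq a n * Real.GammaSeq (a+b+s) n)) atTop
      (𝓝 (Real.Gamma (a+s) * Real.Gamma (a+b) / (Real.Gamma a * Real.Gamma (a+b+s)))) :=
    ((Real.GammaSeq_tendsto_Gamma (a+s)).mul (Real.GammaSeq_tendsto_Gamma (a+b))).div
      ((Real.GammaSeq_tendsto_Gamma a).mul (Real.GammaSeq_tendsto_Gamma (a+b+s)))
      (by positivity)
  -- eventual equality
  have hev : (fun n => Real.GammaSeq (a+s) n * Real.GammaSeq (a+b) n /
      (Real.GammaSeq a n * Real.GammaSeq (a+b+s) n)) =ᶠ[atTop]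
      (fun n => Real.exp (-∫ x in Ioi (0:ℝ), F n x)) := by
    filter_upwards [eventually_ge_atTop 1] with n hn
    rw [bm_gammaSeq s a b hs ha hb n hn, hF]
    simp only
    rw [bm_int_n s a b hs ha hb n, bm_exp_sum s a b hs ha hb n]
  exact tendsto_nhds_unique (hG.congr' hev) hEconv
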